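/- Let (X, μ) be a measure space, p > 1, κ > 1, and S > 0. Suppose the Sobolev inequality (∫ |v|^{pκ} dμ)^{1/κ} ≤ S ∫ |∇v|^p dμ holds for some nonnegative measurable v with ‖v‖_{L^r} > 0 and finite relevant norms, where here |∇v| is replaced by a given nonnegative function g with ∫ g^p dμ in place of the gradient energy. Then for every ε > 0 and every r ∈ (0, pκ), the entropy functional J(r,v) = ∫ (v^r/‖v‖_{L^r}^r) log(v/‖v‖_{L^r}) dμ satisfies r·J(r,v) ≤ (rκSε/(pκ−r))·(∫ g^p dμ)/‖v‖_{L^r}^p − (rκ/(pκ−r))·log ε. -/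

import Mathlib

open MeasureTheory Real

lemma aux_ulogu (u a c : ℝ) (hu : 0 ≤ u) (ha : 0 < a) (hc : 0 < c) :
    u * Real.log u ≤ (u / a) * (c * u ^ a - 1 - Real.log c) := by
  rcases eq_or_lt_of_le hu with h | h
  · simp [← h]
  · have hz : 0 < c * u ^ a := mul_pos hc (Real.rpow_pos_of_pos h a)
    have hlog : Real.log (c * u ^ a) ≤ c * u ^ a - 1 := Real.log_le_sub_one_of_pos hz
    rw [Real.log_mul hc.ne' (Real.rpow_pos_of_pos h a).ne', Real.log_rpow h] at hlog
    rw [div_mul_eq_mul_div, le_div_iff₀ ha]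
    have h2 : a * Real.log u ≤ c * u ^ a - 1 - Real.log c := by linarith
    calc u * Real.log u * a = u * (a * Real.log u) := by ring
    _ ≤ u * (c * u ^ a - 1 - Real.log c) := mul_le_mul_of_nonneg_left h2 h.le

set_option maxHeartbeats 1000000 in
/-- Log-Sobolev type inequality derived from an abstract Sobolev inequality.
`g` plays the role of `|∇v|` and `E = ∫ g^p` is the gradient energy. -/
theorem log_sobolev_from_sobolev
    {X : Type*} [MeasurableSpace X] (μ : Measure X)
    (p κ S : ℝ) (hp : 1 < p) (hκ : 1 < κ) (hS : 0 < S)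
    (v g : X → ℝ) (hv : Measurable v) (hv0 : ∀ x, 0 ≤ v x) (hg0 : ∀ x, 0 ≤ g x)
    (hgInt : Integrable (fun x => g x ^ p) μ)
    (hSob : (∫ x, v x ^ (p * κ) ∂μ) ^ (1 / κ) ≤ S * ∫ x, g x ^ p ∂μ) :
    ∀ ε r : ℝ, 0 < ε → 0 < r → r < p * κ →
      Integrable (fun x => v x ^ r) μ →
      0 < ∫ x, v x ^ r ∂μ →
      Integrable (fun x => v x ^ (p * κ)) μ →
      Integrable (fun x =>
        (v x ^ r / ∫ y, v y ^ r ∂μ) *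
          Real.log (v x / (∫ y, v y ^ r ∂μ) ^ (1 / r))) μ →
      r * ∫ x, (v x ^ r / ∫ y, v y ^ r ∂μ) *
            Real.log (v x / (∫ y, v y ^ r ∂μ) ^ (1 / r)) ∂μ ≤
        (r * κ * S * ε / (p * κ - r)) *
            ((∫ x, g x ^ p ∂μ) / (∫ y, v y ^ r ∂μ) ^ (p / r)) -
          (r * κ / (p * κ - r)) * Real.log ε := by
  intro ε r hε hr hrpκ hvrInt hN hvpκInt hJInt
  set N := ∫ y, v y ^ r ∂μ with hNdef
  set M := ∫ x, v x ^ (p * κ) ∂μ with hMdef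
  set E := ∫ x, g x ^ p ∂μ with hEdef
  clear_value N M E
  have hpκ : 0 < p * κ := lt_trans hr hrpκ
  have hκ0 : 0 < κ := lt_trans one_pos hκ
  -- M > 0
  have hM0 : 0 ≤ M := by
    rw [hMdef]; exact integral_nonneg fun x => Real.rpow_nonneg (hv0 x) _
  have hM : 0 < M := by
    rcases eq_or_lt_of_le hM0 with h | h
    · exfalso
      have hz : (fun x => v x ^ (p * κ)) =ᵐ[μ] 0 := by
        rw [← integral_eq_zero_iff_of_nonneg (fun x => Real.rpow_nonneg (hv0 x) _) hvpκInt]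
        rw [← hMdef]; exact h.symm
      have hv00 : (fun x => v x ^ r) =ᵐ[μ] (fun _ => (0:ℝ)) := by
        filter_upwards [hz] with x hx
        have hvx : v x = 0 := (Real.rpow_eq_zero (hv0 x) hpκ.ne').mp hx
        simp [hvx, Real.zero_rpow hr.ne']
      have : N = 0 := by rw [hNdef, integral_congr_ae hv00, integral_zero]
      linarith
    · exact h
  -- E > 0
  have hSE : 0 < S * E := lt_of_lt_of_le (Real.rpow_pos_of_pos hM _) hSob
  have hE : 0 < E := by nlinarith
  -- notation
  set s := p * κ / r with hsdef
  set a := s - 1 with hadef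
  have hs1 : 1 < s := (one_lt_div hr).mpr hrpκ
  have ha : 0 < a := by rw [hadef]; linarith
  clear_value s a
  have hrs : r * s = p * κ := by rw [hsdef]; field_simp
  have hNs : 0 < N ^ s := Real.rpow_pos_of_pos hN s
  set c := N ^ s / M with hcdef
  clear_value c
  have hc : 0 < c := by rw [hcdef]; exact div_pos hNs hM
  -- the two integrands
  set F := fun x => (v x ^ r / N) * Real.log (v x ^ r / N) with hFdef
  set C1 := (1 / a) * c / N ^ s with hC1def
  set C2 := -((1 + Real.log c) / a) / N with hC2def
  set G := fun x => C1 * v x ^ (p * κ) + C2 * v x ^ r with hGdef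
  clear_value F C1 C2 G
  -- F equals r times the original integrand, pointwise
  have hkey : ∀ x, r * ((v x ^ r / N) * Real.log (v x / N ^ (1 / r))) = F x := by
    intro x
    rcases eq_or_lt_of_le (hv0 x) with h | h
    · simp [hFdef, ← h, Real.zero_rpow hr.ne']
    · simp only [hFdef]
      have h1 : Real.log (v x / N ^ (1 / r)) = Real.log (v x) - (1 / r) * Real.log N := by
        rw [Real.log_div h.ne' (Real.rpow_pos_of_pos hN _).ne', Real.log_rpow hN]
      have h2 : Real.log (v x ^ r / N) = r * Real.log (v x) - Real.log N := by
        rw [Real.log_div (Real.rpow_pos_of_pos h r).ne' hN.ne', Real.log_rpow h]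
      rw [h1, h2]
      field_simp
  -- F ≤ G pointwise
  have hFG : ∀ x, F x ≤ G x := by
    intro x
    rcases eq_or_lt_of_le (hv0 x) with h | h
    · simp [hFdef, hGdef, ← h, Real.zero_rpow hr.ne', Real.zero_rpow hpκ.ne']
    · simp only [hFdef, hGdef]
      have hu : (0:ℝ) ≤ v x ^ r / N := div_nonneg (Real.rpow_nonneg (hv0 x) r) hN.le
      refine le_trans (aux_ulogu (v x ^ r / N) a c hu ha hc) (le_of_eq ?_)
      have hupos : 0 < v x ^ r / N := div_pos (Real.rpow_pos_of_pos h r) hN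
      have hua : (v x ^ r / N) ^ a * (v x ^ r / N) = v x ^ (p * κ) / N ^ s := by
        rw [← Real.rpow_add_one hupos.ne' a]
        have haa : a + 1 = s := by rw [hadef]; ring
        rw [haa, Real.div_rpow (Real.rpow_nonneg (hv0 x) r) hN.le,
          ← Real.rpow_mul (hv0 x), hrs]
      have e1 : C1 * v x ^ (p * κ) = (1 / a) * c * (v x ^ (p * κ) / N ^ s) := by
        rw [hC1def]; ring
      have e2 : C2 * v x ^ r = -((1 + Real.log c) / a) * (v x ^ r / N) := by
        rw [hC2def]; ring
      rw [e1, e2, ← hua]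
      ring
  -- integrability
  have hGInt : Integrable G μ := by
    rw [hGdef]; exact (hvpκInt.const_mul C1).add (hvrInt.const_mul C2)
  have hFInt : Integrable F μ := (hJInt.const_mul r).congr (Filter.Eventually.of_forall hkey)
  -- the main integral bound
  have hrJ : r * ∫ x, (v x ^ r / N) * Real.log (v x / N ^ (1 / r)) ∂μ = ∫ x, F x ∂μ := by
    rw [← integral_const_mul]
    exact integral_congr_ae (Filter.Eventually.of_forall hkey)
  have hIG : ∫ x, G x ∂μ = C1 * M + C2 * N := by
    simp only [hGdef]
    rw [integral_add (hvpκInt.const_mul C1) (hvrInt.const_mul C2), integral_const_mul,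
      integral_const_mul, ← hMdef, ← hNdef]
  have hc1 : C1 * M = 1 / a := by
    rw [hC1def, hcdef]; field_simp
  have hc2 : C2 * N = -((1 + Real.log c) / a) := by
    rw [hC2def]; field_simp
  have hGval : ∫ x, G x ∂μ = (Real.log M - s * Real.log N) / a := by
    rw [hIG, hc1, hc2, hcdef, Real.log_div hNs.ne' hM.ne', Real.log_rpow hN]
    field_simp
    ring
  -- bound log M
  have hMle : M ≤ (S * E) ^ κ := by
    have hMeq : (M ^ (1 / κ)) ^ κ = M := by
      rw [← Real.rpow_mul hM0, one_div_mul_cancel hκ0.ne', Real.rpow_one]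
    calc M = (M ^ (1 / κ)) ^ κ := hMeq.symm
    _ ≤ (S * E) ^ κ := Real.rpow_le_rpow (Real.rpow_nonneg hM0 _) hSob hκ0.le
  have hlogM : Real.log M ≤ κ * Real.log (S * E) := by
    calc Real.log M ≤ Real.log ((S * E) ^ κ) := Real.log_le_log hM hMle
    _ = κ * Real.log (S * E) := Real.log_rpow hSE κ
  -- log y ≤ ε y - log ε
  set T := N ^ (p / r) with hTdef
  have hT : 0 < T := Real.rpow_pos_of_pos hN _
  set y := S * E / T with hydef
  clear_value T y
  have hy : 0 < y := by rw [hydef]; exact div_pos hSE hT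
  have hlogy : Real.log y ≤ ε * y - Real.log ε := by
    have := Real.log_le_sub_one_of_pos (mul_pos hε hy)
    rw [Real.log_mul hε.ne' hy.ne'] at this
    linarith
  have hlogy' : Real.log (S * E) - (p / r) * Real.log N ≤ ε * y - Real.log ε := by
    have : Real.log y = Real.log (S * E) - (p / r) * Real.log N := by
      rw [hydef, Real.log_div hSE.ne' hT.ne', hTdef, Real.log_rpow hN]
    linarith
  -- combine
  have hsplit : s = κ * (p / r) := by rw [hsdef]; field_simp
  have hκa : 0 < κ / a := div_pos hκ0 ha
  have hchain : (Real.log M - s * Real.log N) / a ≤ (κ / a) * (ε * y - Real.log ε) := by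
    have h1 : Real.log M - s * Real.log N ≤ κ * (Real.log (S * E) - (p / r) * Real.log N) := by
      rw [hsplit]; nlinarith
    have h2 : κ * (Real.log (S * E) - (p / r) * Real.log N) ≤ κ * (ε * y - Real.log ε) :=
      mul_le_mul_of_nonneg_left hlogy' hκ0.le
    calc (Real.log M - s * Real.log N) / a
        ≤ κ * (ε * y - Real.log ε) / a := by
          exact (div_le_div_iff_of_pos_right ha).mpr (by linarith)
    _ = (κ / a) * (ε * y - Real.log ε) := by ring
  have hfinal : (κ / a) * (ε * y - Real.log ε) =
      (r * κ * S * ε / (p * κ - r)) * (E / T) - (r * κ / (p * κ - r)) * Real.log ε := by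
    have har : a = (p * κ - r) / r := by rw [hadef, hsdef]; field_simp
    have hpκr : p * κ - r ≠ 0 := ne_of_gt (by linarith)
    have hκa' : κ / a = r * κ / (p * κ - r) := by
      rw [har, div_div_eq_mul_div]; ring
    rw [hκa', hydef]
    ring
  calc r * ∫ x, (v x ^ r / N) * Real.log (v x / N ^ (1 / r)) ∂μ
      = ∫ x, F x ∂μ := hrJ
  _ ≤ ∫ x, G x ∂μ := integral_mono hFInt hGInt hFG
  _ = (Real.log M - s * Real.log N) / a := hGval
  _ ≤ (κ / a) * (ε * y - Real.log ε) := hchain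
  _ = _ := hfinal
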